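/- Let α > 1 and e_α(x) := α^{⌊x⌋}(x - ⌊x⌋ + 1/(α-1)). Then e_α has no poles, and for r = m + ε with m ∈ ℤ≥0, ε ∈ [0,1): T(r, e_α) = m(r, e_α) = (1/2)[ α^m (ε + 1/(α-1)) + α^{-m-1}(1 - ε + 1/(α-1)) ]. Consequently e_α has hyper-order ρ₂(e_α) = limsup_{r→∞} log log T(r, e_α)/log r = 1 (and infinite order). -/

import Mathlib

open Set

/-- `f` is tropical meromorphic: continuous, piecewise linear with one-sided
slopes around every point, and `ω x` is the jump of the derivative at `x`
(right slope minus left slope); the jump points are discrete. -/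
structure TropicalMero (f : ℝ → ℝ) (ω : ℝ → ℝ) : Prop where
  cont : Continuous f
  slopes : ∀ x : ℝ, ∃ ε > 0, ∃ sl sr : ℝ,
    (∀ y ∈ Set.Ioc (x - ε) x, f y = f x + sl * (y - x)) ∧
    (∀ y ∈ Set.Ico x (x + ε), f y = f x + sr * (y - x)) ∧
    sr - sl = ω x
  discrete : ∀ r : ℝ, 0 < r → (Function.support ω ∩ Set.Ioo (-r) r).Finite

/-- Tropical proximity function. -/
noncomputable def mfun (f : ℝ → ℝ) (r : ℝ) : ℝ :=
  (max (f r) 0 + max (f (-r)) 0) / 2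

/-- Tropical counting function for poles (points with `ω b < 0`) in `(-r, r)`. -/
noncomputable def Nfun (ω : ℝ → ℝ) (r : ℝ) : ℝ :=
  (1 / 2) * ∑ᶠ b ∈ {b : ℝ | b ∈ Set.Ioo (-r) r ∧ ω b < 0}, (-(ω b)) * (r - |b|)

/-- Tropical characteristic function. -/
noncomputable def Tfun (f ω : ℝ → ℝ) (r : ℝ) : ℝ := mfun f r + Nfun ω r

/-- The tropical exponential `e_α` for `|α| > 1`. -/
noncomputable def eAlpha (α : ℝ) (x : ℝ) : ℝ :=
  α ^ ⌊x⌋ * (x - ⌊x⌋ + 1 / (α - 1))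

open Real Filter

lemma eAlpha_eq (α x : ℝ) (n : ℤ) (hn : ⌊x⌋ = n) :
    eAlpha α x = α ^ n * (x - n + 1 / (α - 1)) := by
  unfold eAlpha; rw [hn]

lemma eAlpha_pos {α : ℝ} (hα : 1 < α) (x : ℝ) : 0 < eAlpha α x := by
  have h0 : (0:ℝ) < α := by linarith
  have h2 : (⌊x⌋ : ℝ) ≤ x := Int.floor_le x
  have hc : (0:ℝ) < 1 / (α - 1) := div_pos one_pos (by linarith)
  exact mul_pos (zpow_pos h0 _) (by linarith)

lemma alpha_mul_c {α : ℝ} (hα : 1 < α) : α * (1 / (α - 1)) = 1 + 1 / (α - 1) := by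
  have h1 : α - 1 ≠ 0 := by intro h; rw [sub_eq_zero] at h; linarith
  field_simp
  ring

lemma omega_nonneg {α : ℝ} (hα : 1 < α) {ω : ℝ → ℝ}
    (h : TropicalMero (eAlpha α) ω) (x : ℝ) : 0 ≤ ω x := by
  have h0 : (0:ℝ) < α := by linarith
  obtain ⟨ε, hε, sl, sr, hl, hr, hw⟩ := h.slopes x
  set n : ℤ := ⌊x⌋ with hn
  -- right slope
  have hsr : sr = α ^ n := by
    set δ : ℝ := min ε ((n:ℝ) + 1 - x) with hδ
    have hflt : x < (n:ℝ) + 1 := Int.lt_floor_add_one x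
    have hδpos : 0 < δ := lt_min hε (by linarith)
    set y : ℝ := x + δ / 2 with hy
    have hyx : x < y := by simp [hy]; linarith
    have hymem : y ∈ Set.Ico x (x + ε) := by
      constructor
      · linarith
      · have : δ ≤ ε := min_le_left _ _
        simp only [hy]; linarith
    have hfy : ⌊y⌋ = n := by
      rw [Int.floor_eq_iff]
      constructor
      · have : (n:ℝ) ≤ x := Int.floor_le x
        linarith
      · have : δ ≤ (n:ℝ) + 1 - x := min_le_right _ _
        push_cast
        simp only [hy]; linarith
    have e1 := hr y hymem
    rw [eAlpha_eq α y n hfy, eAlpha_eq α x n rfl] at e1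
    have e2 : (sr - α ^ n) * (y - x) = 0 := by ring_nf; ring_nf at e1; linarith
    rcases mul_eq_zero.1 e2 with h' | h'
    · linarith [sub_eq_zero.1 h']
    · exfalso; have : y - x ≠ 0 := by intro hz; rw [sub_eq_zero] at hz; linarith
      exact this h'
  -- left slope: cases
  rcases eq_or_lt_of_le (Int.floor_le x) with hint | hfrac
  · -- x = n, sl = α^(n-1)
    have hsl : sl = α ^ (n - 1) := by
      set δ : ℝ := min ε 1 with hδ
      have hδpos : 0 < δ := lt_min hε one_pos
      have hδ1 : δ ≤ 1 := min_le_right _ _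
      set y : ℝ := x - δ / 2 with hy
      have hyx : y < x := by simp [hy]; linarith
      have hymem : y ∈ Set.Ioc (x - ε) x := by
        constructor
        · have : δ ≤ ε := min_le_left _ _
          simp only [hy]; linarith
        · linarith
      have hfy : ⌊y⌋ = n - 1 := by
        rw [Int.floor_eq_iff]
        push_cast
        constructor
        · simp only [hy]; rw [← hint]; linarith
        · simp only [hy]; rw [← hint]; linarith
      have e1 := hl y hymem
      rw [eAlpha_eq α y (n-1) hfy, eAlpha_eq α x n rfl] at e1
      have hxn : x = (n:ℝ) := hint.symm
      have han : α ^ n = α ^ (n-1) * α := by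
        rw [← zpow_add_one₀ (by linarith : α ≠ 0)]; ring_nf
      have hac : α * (1 / (α - 1)) = 1 + 1 / (α - 1) := alpha_mul_c hα
      have e2 : (sl - α ^ (n-1)) * (y - x) = 0 := by
        push_cast at e1
        rw [hxn, han] at e1
        rw [hxn]
        linear_combination (-1 : ℝ) * e1 - α ^ (n-1) * hac
      rcases mul_eq_zero.1 e2 with h' | h'
      · linarith [sub_eq_zero.1 h']
      · exfalso; have : y - x ≠ 0 := by intro hz; rw [sub_eq_zero] at hz; linarith
        exact this h'
    rw [← hw, hsr, hsl]
    have : α ^ (n-1) ≤ α ^ n := zpow_le_zpow_right₀ (le_of_lt hα) (by omega)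
    linarith
  · -- x not integer, sl = α^n
    have hsl : sl = α ^ n := by
      set δ : ℝ := min ε (x - (n:ℝ)) with hδ
      have hδpos : 0 < δ := lt_min hε (by linarith)
      set y : ℝ := x - δ / 2 with hy
      have hyx : y < x := by simp [hy]; linarith
      have hymem : y ∈ Set.Ioc (x - ε) x := by
        constructor
        · have : δ ≤ ε := min_le_left _ _
          simp only [hy]; linarith
        · linarith
      have hfy : ⌊y⌋ = n := by
        rw [Int.floor_eq_iff]
        have h2 : δ ≤ x - (n:ℝ) := min_le_right _ _
        have hflt : x < (n:ℝ) + 1 := Int.lt_floor_add_one x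
        push_cast
        constructor
        · simp only [hy]; linarith
        · simp only [hy]; linarith
      have e1 := hl y hymem
      rw [eAlpha_eq α y n hfy, eAlpha_eq α x n rfl] at e1
      have e2 : (sl - α ^ n) * (y - x) = 0 := by ring_nf; ring_nf at e1; linarith
      rcases mul_eq_zero.1 e2 with h' | h'
      · linarith [sub_eq_zero.1 h']
      · exfalso; have : y - x ≠ 0 := by intro hz; rw [sub_eq_zero] at hz; linarith
        exact this h'
    rw [← hw, hsr, hsl]; linarith

lemma Nfun_zero {ω : ℝ → ℝ} (hω : ∀ x, 0 ≤ ω x) (r : ℝ) : Nfun ω r = 0 := by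
  unfold Nfun
  have hs : {b : ℝ | b ∈ Set.Ioo (-r) r ∧ ω b < 0} = ∅ := by
    ext b
    simp only [Set.mem_setOf_eq, Set.mem_empty_iff_false, iff_false, not_and]
    intro _ hneg
    exact absurd hneg (not_lt.2 (hω b))
  rw [hs, finsum_mem_empty, mul_zero]

lemma mfun_eAlpha {α : ℝ} (hα : 1 < α) (m : ℕ) (ε : ℝ) (hε : ε ∈ Set.Ico (0:ℝ) 1) :
    mfun (eAlpha α) ((m : ℝ) + ε) =
      (1 / 2) * (α ^ m * (ε + 1 / (α - 1)) +
        α ^ (-(m : ℤ) - 1) * (1 - ε + 1 / (α - 1))) := by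
  obtain ⟨hε0, hε1⟩ := hε
  have h0 : (0:ℝ) < α := by linarith
  have hne : α ≠ 0 := by linarith
  have hfr : ⌊(m:ℝ) + ε⌋ = (m:ℤ) := by
    rw [Int.floor_eq_iff]
    push_cast
    constructor <;> linarith
  have h1 : eAlpha α ((m:ℝ) + ε) = α ^ m * (ε + 1 / (α - 1)) := by
    rw [eAlpha_eq α _ (m:ℤ) hfr]
    rw [zpow_natCast]
    push_cast
    ring
  have h2 : eAlpha α (-((m:ℝ) + ε)) = α ^ (-(m:ℤ) - 1) * (1 - ε + 1 / (α - 1)) := by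
    rcases eq_or_lt_of_le hε0 with h' | h'
    · -- ε = 0
      have hfl : ⌊-((m:ℝ) + ε)⌋ = -(m:ℤ) := by
        rw [← h']
        have hcast : (-(((m:ℕ):ℝ) + 0)) = ((-(m:ℤ) : ℤ) : ℝ) := by push_cast; ring
        rw [hcast, Int.floor_intCast]
      rw [eAlpha_eq α _ _ hfl]
      rw [← h']
      push_cast
      have han : α ^ (-(m:ℤ)) = α ^ (-(m:ℤ) - 1) * α := by
        rw [← zpow_add_one₀ hne]; ring_nf
      rw [han, mul_assoc]
      linear_combination α ^ (-(m:ℤ) - 1) * (alpha_mul_c hα)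
    · have hfl : ⌊-((m:ℝ) + ε)⌋ = -(m:ℤ) - 1 := by
        rw [Int.floor_eq_iff]
        push_cast
        constructor <;> linarith
      rw [eAlpha_eq α _ _ hfl]
      push_cast
      ring
  unfold mfun
  rw [max_eq_left (eAlpha_pos hα ((m:ℝ) + ε)).le,
      max_eq_left (eAlpha_pos hα (-((m:ℝ) + ε))).le, h1, h2]
  ring

lemma aux_tendsto (a b : ℝ) (ha : 0 < a) :
    Filter.Tendsto (fun r : ℝ => Real.log (a * r + b) / Real.log r)
      Filter.atTop (nhds 1) := by
  have hb : Tendsto (fun r : ℝ => b / r) atTop (nhds 0) :=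
    tendsto_const_nhds.div_atTop tendsto_id
  have h1 : Tendsto (fun r : ℝ => a + b / r) atTop (nhds a) := by
    simpa using tendsto_const_nhds.add hb
  have h2 : Tendsto (fun r : ℝ => Real.log (a + b / r)) atTop (nhds (Real.log a)) :=
    (Real.continuousAt_log ha.ne').tendsto.comp h1
  have h3 : Tendsto (fun r : ℝ => Real.log (a + b / r) / Real.log r) atTop (nhds 0) :=
    h2.div_atTop Real.tendsto_log_atTop
  have h4 : Tendsto (fun r : ℝ => 1 + Real.log (a + b / r) / Real.log r) atTop (nhds 1) := by
    simpa using tendsto_const_nhds.add h3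
  apply h4.congr'
  filter_upwards [eventually_gt_atTop (max 1 (2 * |b| / a))] with r hr
  have hr1 : 1 < r := (le_max_left _ _).trans_lt hr
  have hr0 : 0 < r := by linarith
  have hab : 0 < a * r + b := by
    have h5 : 2 * |b| / a < r := (le_max_right _ _).trans_lt hr
    have h6 : 2 * |b| < r * a := by rwa [div_lt_iff₀ ha] at h5
    have h7 := neg_abs_le b
    nlinarith [abs_nonneg b]
  have h7 : 0 < a + b / r := by
    have he : (a * r + b) / r = a + b / r := by
      rw [add_div, mul_div_assoc, div_self hr0.ne', mul_one]
    rw [← he]; exact div_pos hab hr0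
  have hlr : Real.log r ≠ 0 := (Real.log_pos hr1).ne'
  have key : a * r + b = r * (a + b / r) := by
    field_simp
  rw [key, Real.log_mul hr0.ne' h7.ne', add_div, div_self hlr]

lemma Tfun_bounds {α : ℝ} (hα : 1 < α) {ω : ℝ → ℝ}
    (hω : ∀ x, 0 ≤ ω x) {r : ℝ} (hr : 1 ≤ r) :
    (1 / (α - 1)) / (2 * α) * α ^ r ≤ Tfun (eAlpha α) ω r ∧
    Tfun (eAlpha α) ω r ≤ (1 + 1 / (α - 1)) * α ^ r := by
  have h0 : (0:ℝ) < α := by linarith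
  have hc : (0:ℝ) < 1 / (α - 1) := div_pos one_pos (by linarith)
  have hT : Tfun (eAlpha α) ω r = (eAlpha α r + eAlpha α (-r)) / 2 := by
    unfold Tfun
    rw [Nfun_zero hω r, add_zero]
    unfold mfun
    rw [max_eq_left (eAlpha_pos hα r).le, max_eq_left (eAlpha_pos hα (-r)).le]
  have hrpow_pos : (0:ℝ) < α ^ r := Real.rpow_pos_of_pos h0 r
  -- int powers as rpow
  have hfl1 : (α:ℝ) ^ ⌊r⌋ = α ^ ((⌊r⌋:ℝ)) := (Real.rpow_intCast α ⌊r⌋).symm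
  have hfl2 : (α:ℝ) ^ ⌊-r⌋ = α ^ ((⌊-r⌋:ℝ)) := (Real.rpow_intCast α ⌊-r⌋).symm
  constructor
  · -- lower bound
    have h1 : α ^ (r - 1) ≤ α ^ ((⌊r⌋:ℝ)) :=
      Real.rpow_le_rpow_of_exponent_le hα.le
        (by have := Int.sub_one_lt_floor r; linarith)
    have h2 : α ^ (r - 1) = α ^ r / α := by
      rw [Real.rpow_sub h0, Real.rpow_one]
    have h3 : (1 / (α - 1)) * (α ^ r / α) ≤ eAlpha α r := by
      unfold eAlpha
      rw [hfl1]
      have hfr0 : (⌊r⌋:ℝ) ≤ r := Int.floor_le r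
      have := Real.rpow_pos_of_pos h0 ((⌊r⌋:ℝ))
      nlinarith [h1, h2]
    have h4 : 0 < eAlpha α (-r) := eAlpha_pos hα (-r)
    rw [hT]
    have : (1 / (α - 1)) / (2 * α) * α ^ r = ((1 / (α - 1)) * (α ^ r / α)) / 2 := by
      field_simp
    rw [this]
    linarith
  · -- upper bound
    have hfr1 : r - (⌊r⌋:ℝ) < 1 := by have := Int.lt_floor_add_one r; linarith
    have hfr0 : (0:ℝ) ≤ r - (⌊r⌋:ℝ) := by have := Int.floor_le r; linarith
    have h1 : α ^ ((⌊r⌋:ℝ)) ≤ α ^ r :=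
      Real.rpow_le_rpow_of_exponent_le hα.le (Int.floor_le r)
    have h2 : eAlpha α r ≤ (1 + 1 / (α - 1)) * α ^ r := by
      unfold eAlpha
      rw [hfl1]
      have hp := Real.rpow_pos_of_pos h0 ((⌊r⌋:ℝ))
      nlinarith
    have hnfl : ((⌊-r⌋:ℝ)) ≤ 0 := by
      have : ⌊-r⌋ ≤ ⌊(0:ℝ)⌋ := Int.floor_le_floor (by linarith)
      rw [Int.floor_zero] at this
      exact_mod_cast this
    have h3 : α ^ ((⌊-r⌋:ℝ)) ≤ α ^ r :=
      Real.rpow_le_rpow_of_exponent_le hα.le (by linarith)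
    have hfr1' : -r - (⌊-r⌋:ℝ) < 1 := by have := Int.lt_floor_add_one (-r); linarith
    have hfr0' : (0:ℝ) ≤ -r - (⌊-r⌋:ℝ) := by have := Int.floor_le (-r); linarith
    have h4 : eAlpha α (-r) ≤ (1 + 1 / (α - 1)) * α ^ r := by
      unfold eAlpha
      rw [hfl2]
      have hp := Real.rpow_pos_of_pos h0 ((⌊-r⌋:ℝ))
      nlinarith
    rw [hT]
    linarith

theorem stmt17 (α : ℝ) (hα : 1 < α) (ω : ℝ → ℝ)
    (h : TropicalMero (eAlpha α) ω) :
    (∀ r : ℝ, 0 < r → Nfun ω r = 0) ∧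
    (∀ (m : ℕ) (ε : ℝ), ε ∈ Set.Ico (0 : ℝ) 1 →
      Tfun (eAlpha α) ω ((m : ℝ) + ε) = mfun (eAlpha α) ((m : ℝ) + ε) ∧
      mfun (eAlpha α) ((m : ℝ) + ε) =
        (1 / 2) * (α ^ m * (ε + 1 / (α - 1)) +
          α ^ (-(m : ℤ) - 1) * (1 - ε + 1 / (α - 1)))) ∧
    Filter.limsup
      (fun r => Real.log (Real.log (Tfun (eAlpha α) ω r)) / Real.log r)
      Filter.atTop = 1 := by
  have h0 : (0:ℝ) < α := by linarith
  have hω : ∀ x, 0 ≤ ω x := omega_nonneg hα h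
  have hNzero : ∀ r : ℝ, Nfun ω r = 0 := Nfun_zero hω
  refine ⟨fun r _ => hNzero r, fun m ε hε => ⟨?_, mfun_eAlpha hα m ε hε⟩, ?_⟩
  · unfold Tfun; rw [hNzero, add_zero]
  · -- limsup
    have hc : (0:ℝ) < 1 / (α - 1) := div_pos one_pos (by linarith)
    set c1 : ℝ := (1 / (α - 1)) / (2 * α) with hc1def
    set C : ℝ := 1 + 1 / (α - 1) with hCdef
    have hc1 : 0 < c1 := div_pos hc (by linarith)
    have hC : 0 < C := by rw [hCdef]; linarith
    have hla : 0 < Real.log α := Real.log_pos hα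
    have hLtop : Tendsto (fun r : ℝ => Real.log α * r + Real.log c1) atTop atTop :=
      tendsto_atTop_add_const_right _ _ (Tendsto.const_mul_atTop hla tendsto_id)
    have hlow := aux_tendsto (Real.log α) (Real.log c1) hla
    have hhigh := aux_tendsto (Real.log α) (Real.log C) hla
    have key : Tendsto
        (fun r => Real.log (Real.log (Tfun (eAlpha α) ω r)) / Real.log r)
        atTop (nhds 1) := by
      apply tendsto_of_tendsto_of_tendsto_of_le_of_le' hlow hhigh
      · filter_upwards [eventually_gt_atTop (1:ℝ), hLtop.eventually_ge_atTop 1]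
          with r hr1 hL1
        obtain ⟨hlb, hub⟩ := Tfun_bounds hα hω hr1.le
        have hrpow_pos : (0:ℝ) < α ^ r := Real.rpow_pos_of_pos h0 r
        have hTpos : 0 < Tfun (eAlpha α) ω r := lt_of_lt_of_le (by positivity) hlb
        have hlogT : Real.log α * r + Real.log c1 ≤ Real.log (Tfun (eAlpha α) ω r) := by
          have := Real.log_le_log (by positivity) hlb
          rwa [Real.log_mul hc1.ne' hrpow_pos.ne', Real.log_rpow h0,
            add_comm, mul_comm r (Real.log α)] at this
        have hloglogT : Real.log (Real.log α * r + Real.log c1) ≤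
            Real.log (Real.log (Tfun (eAlpha α) ω r)) :=
          Real.log_le_log (by linarith) hlogT
        have hlogr : 0 < Real.log r := Real.log_pos hr1
        exact div_le_div_of_nonneg_right hloglogT hlogr.le
      · filter_upwards [eventually_gt_atTop (1:ℝ), hLtop.eventually_ge_atTop 1]
          with r hr1 hL1
        obtain ⟨hlb, hub⟩ := Tfun_bounds hα hω hr1.le
        have hrpow_pos : (0:ℝ) < α ^ r := Real.rpow_pos_of_pos h0 r
        have hTpos : 0 < Tfun (eAlpha α) ω r := lt_of_lt_of_le (by positivity) hlb
        have hlogT : Real.log (Tfun (eAlpha α) ω r) ≤ Real.log α * r + Real.log C := by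
          have := Real.log_le_log hTpos hub
          rwa [Real.log_mul hC.ne' hrpow_pos.ne', Real.log_rpow h0,
            add_comm, mul_comm r (Real.log α)] at this
        have hlogT' : (1:ℝ) ≤ Real.log (Tfun (eAlpha α) ω r) := by
          have := Real.log_le_log (by positivity) hlb
          rw [Real.log_mul hc1.ne' hrpow_pos.ne', Real.log_rpow h0] at this
          linarith [hL1, this]
        have hloglogT : Real.log (Real.log (Tfun (eAlpha α) ω r)) ≤
            Real.log (Real.log α * r + Real.log C) :=
          Real.log_le_log (by linarith) hlogT
        have hlogr : 0 < Real.log r := Real.log_pos hr1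
        exact div_le_div_of_nonneg_right hloglogT hlogr.le
    exact key.limsup_eq
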